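/- arXiv:0803.2629 — 4 statements merged into one kernel-verified Lean document; each statement's English description precedes it below -/
import Mathlib

section
/- Let n ≥ 2 and let (x, y) ∈ ℂ^n × ℂ^n. Then (x, y) satisfies the system: x_0 = y_0 = 1, x_k y_k = 1 for 1 ≤ k ≤ n−1, and Σ_{m=0}^{n−1} x_{k+m} y_m = 0 for 1 ≤ k ≤ n−1 (indices mod n), if and only if (x, y) satisfies the system: x_0 = y_0 = 1, x_k y_k = 1 for 1 ≤ k ≤ n−1, and x̂_k · ŷ_{−k} = 1 for 1 ≤ k ≤ n−1. -/
open scoped BigOperators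

/-- The discrete Fourier transform on `ℂ^n`:
`û_j = (1/√n) ∑_{k=0}^{n-1} e^{2πi jk/n} u_k`, indices computed modulo `n`. -/
noncomputable def dft (n : ℕ) [NeZero n] (u : ZMod n → ℂ) : ZMod n → ℂ := fun j =>
  (1 / (Real.sqrt n : ℂ)) * ∑ k : ZMod n,
    Complex.exp (2 * (Real.pi : ℂ) * Complex.I * (j.val : ℂ) * (k.val : ℂ) / (n : ℂ)) * u k

private lemma exp_eq_char (n : ℕ) [NeZero n] (j k : ZMod n) :
    Complex.exp (2 * (Real.pi : ℂ) * Complex.I * (j.val : ℂ) * (k.val : ℂ) / (n : ℂ)) =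
      ZMod.stdAddChar (j * k) := by
  have h := ZMod.stdAddChar_coe (N := n) ((j.val : ℤ) * (k.val : ℤ))
  have h2 : (((j.val : ℤ) * (k.val : ℤ) : ℤ) : ZMod n) = j * k := by
    push_cast
    simp [ZMod.natCast_val, ZMod.intCast_zmod_cast]
  rw [h2] at h
  rw [h]
  push_cast
  ring_nf

private lemma char_sum (n : ℕ) [NeZero n] (t : ZMod n) :
    ∑ i : ZMod n, ZMod.stdAddChar (t * i) = if t = 0 then (n : ℂ) else 0 := by
  split_ifs with h
  · simp only [h, zero_mul, AddChar.map_zero_eq_one, Finset.sum_const, Finset.card_univ,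
      ZMod.card, nsmul_eq_mul, mul_one]
  · exact AddChar.sum_eq_zero_of_ne_one (ZMod.isPrimitive_stdAddChar n h)

private lemma erase_char_sum (n : ℕ) [NeZero n] (t : ZMod n) (ht : t ≠ 0) :
    ∑ k ∈ Finset.univ.erase (0 : ZMod n), ZMod.stdAddChar (t * k) = -1 := by
  rw [Finset.sum_erase_eq_sub (Finset.mem_univ (0 : ZMod n)), char_sum, if_neg ht]
  simp

private lemma dft_mul_key (n : ℕ) [NeZero n] (x y : ZMod n → ℂ) (k : ZMod n) :
    dft n x k * dft n y (-k) =
      (n : ℂ)⁻¹ * ∑ l : ZMod n, ZMod.stdAddChar (k * l) * ∑ m : ZMod n, x (l + m) * y m := by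
  unfold dft
  simp only [exp_eq_char]
  rw [mul_mul_mul_comm]
  have hs : (1 / (Real.sqrt n : ℂ)) * (1 / (Real.sqrt n : ℂ)) = (n : ℂ)⁻¹ := by
    rw [div_mul_div_comm, one_mul, ← Complex.ofReal_mul, Real.mul_self_sqrt (Nat.cast_nonneg n)]
    norm_num
  rw [hs]
  congr 1
  rw [Finset.sum_mul_sum]
  simp only [Finset.mul_sum]
  rw [Finset.sum_comm (γ := ZMod n)]
  rw [Finset.sum_comm (γ := ZMod n) (s := Finset.univ) (t := Finset.univ)
    (f := fun l m => ZMod.stdAddChar (k * l) * (x (l + m) * y m))]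
  refine Finset.sum_congr rfl fun m _ => ?_
  rw [← Equiv.sum_comp (Equiv.addRight m)
    (fun j => ZMod.stdAddChar (k * j) * x j * (ZMod.stdAddChar (-k * m) * y m))]
  refine Finset.sum_congr rfl fun l _ => ?_
  simp only [Equiv.coe_addRight]
  rw [show ZMod.stdAddChar (k * (l + m)) * x (l + m) * (ZMod.stdAddChar (-k * m) * y m)
      = (ZMod.stdAddChar (k * (l + m)) * ZMod.stdAddChar (-k * m)) * (x (l + m) * y m) by ring,
    ← AddChar.map_add_eq_mul, show k * (l + m) + -k * m = k * l by ring]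

private lemma backward_aux (n : ℕ) [NeZero n] (hn : 2 ≤ n) (c : ZMod n → ℂ)
    (hc0 : c 0 = (n : ℂ))
    (hg : ∀ k : ZMod n, k ≠ 0 → ∑ l : ZMod n, ZMod.stdAddChar (k * l) * c l = n) :
    ∀ l : ZMod n, l ≠ 0 → c l = 0 := by
  have hn0 : (n : ℂ) ≠ 0 := Nat.cast_ne_zero.mpr (NeZero.ne n)
  haveI : Fact (1 < n) := ⟨hn⟩
  have h1ne : (1 : ZMod n) ≠ 0 := one_ne_zero
  have const : ∀ l1 : ZMod n, l1 ≠ 0 →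
      (n : ℂ) * c l1 = (∑ l : ZMod n, c l) - n := by
    intro l1 hl1
    have way1 : ∑ k : ZMod n, ZMod.stdAddChar (-(k * l1)) *
        (∑ l : ZMod n, ZMod.stdAddChar (k * l) * c l) = (n : ℂ) * c l1 := by
      calc ∑ k : ZMod n, ZMod.stdAddChar (-(k * l1)) *
            ∑ l : ZMod n, ZMod.stdAddChar (k * l) * c l
          = ∑ k : ZMod n, ∑ l : ZMod n, ZMod.stdAddChar ((l - l1) * k) * c l := by
            refine Finset.sum_congr rfl fun k _ => ?_
            rw [Finset.mul_sum]
            refine Finset.sum_congr rfl fun l _ => ?_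
            rw [← mul_assoc, ← AddChar.map_add_eq_mul]
            ring_nf
        _ = ∑ l : ZMod n, (∑ k : ZMod n, ZMod.stdAddChar ((l - l1) * k)) * c l := by
            rw [Finset.sum_comm]
            simp [Finset.sum_mul]
        _ = ∑ l : ZMod n, (if l - l1 = 0 then (n : ℂ) else 0) * c l := by
            simp_rw [char_sum]
        _ = (n : ℂ) * c l1 := by
            simp_rw [sub_eq_zero, ite_mul, zero_mul]
            simp [Finset.sum_ite_eq']
    have way2 : ∑ k : ZMod n, ZMod.stdAddChar (-(k * l1)) *
        (∑ l : ZMod n, ZMod.stdAddChar (k * l) * c l) = (∑ l : ZMod n, c l) - n := by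
      rw [← Finset.add_sum_erase _ _ (Finset.mem_univ (0 : ZMod n))]
      have hterm : ∀ k ∈ Finset.univ.erase (0 : ZMod n),
          ZMod.stdAddChar (-(k * l1)) * (∑ l : ZMod n, ZMod.stdAddChar (k * l) * c l)
            = ZMod.stdAddChar ((-l1) * k) * (n : ℂ) := by
        intro k hk
        rw [hg k (Finset.mem_erase.mp hk).1]
        ring_nf
      rw [Finset.sum_congr rfl hterm, ← Finset.sum_mul,
        erase_char_sum n (-l1) (neg_ne_zero.mpr hl1)]
      simp
      ring
    rw [way1] at way2
    exact way2
  have hAzero : (∑ l : ZMod n, c l) - n = 0 := by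
    have e1 : (n : ℂ) * (n : ℂ)
        = ∑ l : ZMod n, ZMod.stdAddChar ((1 : ZMod n) * l) * ((n : ℂ) * c l) := by
      rw [show ∑ l : ZMod n, ZMod.stdAddChar ((1 : ZMod n) * l) * ((n : ℂ) * c l)
          = (n : ℂ) * ∑ l : ZMod n, ZMod.stdAddChar ((1 : ZMod n) * l) * c l by
        rw [Finset.mul_sum]; exact Finset.sum_congr rfl fun l _ => by ring]
      rw [hg 1 h1ne]
    have e2 : ∑ l : ZMod n, ZMod.stdAddChar ((1 : ZMod n) * l) * ((n : ℂ) * c l)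
        = (n : ℂ) * (n : ℂ) + (-1) * ((∑ l : ZMod n, c l) - n) := by
      rw [← Finset.add_sum_erase _ _ (Finset.mem_univ (0 : ZMod n))]
      have hterm : ∀ l ∈ Finset.univ.erase (0 : ZMod n),
          ZMod.stdAddChar ((1 : ZMod n) * l) * ((n : ℂ) * c l)
            = ZMod.stdAddChar ((1 : ZMod n) * l) * ((∑ l : ZMod n, c l) - n) := by
        intro l hl
        rw [const l (Finset.mem_erase.mp hl).1]
      rw [Finset.sum_congr rfl hterm, ← Finset.sum_mul, erase_char_sum n 1 h1ne]
      simp [hc0]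
    have e3 := e1.trans e2
    linear_combination e3
  intro l hl
  have h := const l hl
  rw [hAzero] at h
  exact (mul_eq_zero.mp h).resolve_left hn0

/-- The system `x_0 = y_0 = 1`, `x_k y_k = 1` (1 ≤ k ≤ n-1),
`∑_m x_{k+m} y_m = 0` (1 ≤ k ≤ n-1) is equivalent to the system
`x_0 = y_0 = 1`, `x_k y_k = 1` (1 ≤ k ≤ n-1), `x̂_k ŷ_{-k} = 1` (1 ≤ k ≤ n-1). -/
theorem xy_system_iff_fourier_system (n : ℕ) [NeZero n] (hn : 2 ≤ n)
    (x y : ZMod n → ℂ) :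
    (x 0 = 1 ∧ y 0 = 1 ∧ (∀ k : ZMod n, k ≠ 0 → x k * y k = 1) ∧
      (∀ k : ZMod n, k ≠ 0 → ∑ m : ZMod n, x (k + m) * y m = 0)) ↔
    (x 0 = 1 ∧ y 0 = 1 ∧ (∀ k : ZMod n, k ≠ 0 → x k * y k = 1) ∧
      (∀ k : ZMod n, k ≠ 0 → dft n x k * dft n y (-k) = 1)) := by
  have hn0 : (n : ℂ) ≠ 0 := Nat.cast_ne_zero.mpr (NeZero.ne n)
  constructor
  · rintro ⟨h1, h2, h3, h4⟩
    refine ⟨h1, h2, h3, fun k hk => ?_⟩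
    have c0 : ∑ m : ZMod n, x ((0 : ZMod n) + m) * y m = n := by
      simp only [zero_add]
      rw [show ∑ m : ZMod n, x m * y m = ∑ _m : ZMod n, (1 : ℂ) from
        Finset.sum_congr rfl fun m _ => by
          by_cases hm : m = 0
          · simp [hm, h1, h2]
          · exact h3 m hm]
      simp [ZMod.card]
    rw [dft_mul_key, Finset.sum_eq_single (0 : ZMod n)]
    · rw [c0, mul_zero, AddChar.map_zero_eq_one, one_mul, inv_mul_cancel₀ hn0]
    · intro l _ hl
      rw [h4 l hl, mul_zero]
    · simp
  · rintro ⟨h1, h2, h3, hF⟩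
    refine ⟨h1, h2, h3, ?_⟩
    have c0 : (fun l => ∑ m : ZMod n, x (l + m) * y m) 0 = (n : ℂ) := by
      simp only [zero_add]
      rw [show ∑ m : ZMod n, x m * y m = ∑ _m : ZMod n, (1 : ℂ) from
        Finset.sum_congr rfl fun m _ => by
          by_cases hm : m = 0
          · simp [hm, h1, h2]
          · exact h3 m hm]
      simp [ZMod.card]
    refine backward_aux n hn (fun l => ∑ m : ZMod n, x (l + m) * y m) c0 fun k hk => ?_
    have h := hF k hk
    rw [dft_mul_key] at h
    rw [inv_mul_eq_one₀ hn0] at h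
    exact h.symm
end

section
/- Let n ≥ 2. The map which sends a cyclic n-root z = (z_0, …, z_{n−1}) to the vector x = (x_0, …, x_{n−1}) defined by x_0 = 1, x_1 = z_0, x_2 = z_0 z_1, …, x_{n−1} = z_0 z_1 ⋯ z_{n−2} is a bijection from the set of cyclic n-roots onto the set of cyclic n-roots on x-level, and its inverse sends x to (x_1/x_0, x_2/x_1, …, x_0/x_{n−1}). -/
open scoped BigOperators

/-- A cyclic `n`-root: `z ∈ ℂ^n` with `∑_{i=0}^{n-1} z_i z_{i+1} ⋯ z_{i+k-1} = 0` for
`1 ≤ k ≤ n-1` (indices mod `n`) and `z_0 z_1 ⋯ z_{n-1} = 1`. -/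
def IsCyclicRoot (n : ℕ) [NeZero n] (z : ZMod n → ℂ) : Prop :=
  (∀ k : ℕ, 1 ≤ k → k ≤ n - 1 →
    ∑ i : ZMod n, ∏ t ∈ Finset.range k, z (i + (t : ZMod n)) = 0) ∧
  ∏ i : ZMod n, z i = 1

/-- A cyclic `n`-root on `x`-level: `x ∈ (ℂ*)^n` with `x_0 = 1` and
`∑_{m=0}^{n-1} x_{m+j}/x_m = 0` for `1 ≤ j ≤ n-1` (indices mod `n`). -/
def IsCyclicRootXLevel (n : ℕ) [NeZero n] (x : ZMod n → ℂ) : Prop :=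
  (∀ i, x i ≠ 0) ∧ x 0 = 1 ∧
  ∀ j : ZMod n, j ≠ 0 → ∑ m : ZMod n, x (m + j) / x m = 0


lemma prod_range_zmod {M : Type*} [CommMonoid M] (n : ℕ) [NeZero n] (g : ZMod n → M) :
    ∏ s ∈ Finset.range n, g (s : ZMod n) = ∏ i : ZMod n, g i := by
  refine Finset.prod_nbij' (fun s => (s : ZMod n)) (fun i => i.val) ?_ ?_ ?_ ?_ ?_
  · intro a ha; exact Finset.mem_univ _
  · intro a _; exact Finset.mem_range.2 (ZMod.val_lt a)
  · intro a ha; exact ZMod.val_cast_of_lt (Finset.mem_range.1 ha)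
  · intro a _; simp [ZMod.natCast_val, ZMod.cast_id]
  · intro a _; rfl

lemma shift_prod (n : ℕ) [NeZero n] (z : ZMod n → ℂ) (c : ZMod n) :
    ∏ s ∈ Finset.range n, z (c + (s : ZMod n)) = ∏ i : ZMod n, z i := by
  rw [prod_range_zmod n (fun i => z (c + i))]
  exact Fintype.prod_equiv (Equiv.addLeft c) _ _ (fun i => rfl)

lemma F_add (n : ℕ) [NeZero n] (z : ZMod n → ℂ) (m k : ℕ) :
    ∏ t ∈ Finset.range (m + k), z (t : ZMod n) =
      (∏ t ∈ Finset.range m, z (t : ZMod n)) *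
        ∏ s ∈ Finset.range k, z ((m : ZMod n) + (s : ZMod n)) := by
  rw [Finset.prod_range_add]
  exact congrArg _ (Finset.prod_congr rfl fun s _ => congrArg z (by push_cast; ring))

lemma F_mod (n : ℕ) [NeZero n] (z : ZMod n → ℂ) (h1 : ∏ i : ZMod n, z i = 1) (a : ℕ) :
    ∏ t ∈ Finset.range (a % n), z (t : ZMod n) = ∏ t ∈ Finset.range a, z (t : ZMod n) := by
  conv_rhs => rw [← Nat.mod_add_div a n]
  generalize a / n = q
  induction q with
  | zero => simp
  | succ q ih =>
      rw [Nat.mul_succ, ← Nat.add_assoc, F_add, shift_prod, h1, mul_one]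
      exact ih

lemma mapDiv (n : ℕ) [NeZero n] (z : ZMod n → ℂ) (h1 : ∏ i : ZMod n, z i = 1) (m j : ZMod n) :
    (∏ t ∈ Finset.range (m + j).val, z (t : ZMod n)) /
      (∏ t ∈ Finset.range m.val, z (t : ZMod n)) =
      ∏ s ∈ Finset.range j.val, z (m + (s : ZMod n)) := by
  have hz0 : ∀ i, z i ≠ 0 := fun i hi => by
    rw [Finset.prod_eq_zero (Finset.mem_univ i) hi] at h1
    exact zero_ne_one h1
  have hF : ∀ k : ℕ, ∏ t ∈ Finset.range k, z (t : ZMod n) ≠ 0 :=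
    fun k => Finset.prod_ne_zero_iff.2 fun t _ => hz0 _
  have hm : ((m.val : ZMod n)) = m := by simp [ZMod.natCast_val, ZMod.cast_id]
  rw [ZMod.val_add, F_mod n z h1, F_add, hm]
  exact mul_div_cancel_left₀ _ (hF _)

lemma telescope (n : ℕ) [NeZero n] (x : ZMod n → ℂ) (hx : ∀ i, x i ≠ 0) (c : ZMod n) (k : ℕ) :
    ∏ t ∈ Finset.range k, (x (c + (t : ZMod n) + 1) / x (c + (t : ZMod n))) =
      x (c + (k : ZMod n)) / x c := by
  induction k with
  | zero => simp [div_self (hx c)]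
  | succ k ih =>
      rw [Finset.prod_range_succ, ih]
      have h1 : ((k + 1 : ℕ) : ZMod n) = (k : ZMod n) + 1 := by push_cast; ring
      rw [h1, ← add_assoc]
      have h2 := hx (c + (k : ZMod n))
      have h3 := hx c
      field_simp

/-- The map `z ↦ x`, `x_i = z_0 z_1 ⋯ z_{i-1}` (so `x_0 = 1`), is a bijection from the set
of cyclic `n`-roots onto the set of cyclic `n`-roots on `x`-level, with inverse
`x ↦ (x_1/x_0, x_2/x_1, …, x_0/x_{n-1})`. -/
theorem cyclicRoot_equiv_xLevel (n : ℕ) [NeZero n] (hn : 2 ≤ n) :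
    Set.BijOn (fun (z : ZMod n → ℂ) (i : ZMod n) => ∏ t ∈ Finset.range i.val, z (t : ZMod n))
      {z | IsCyclicRoot n z} {x | IsCyclicRootXLevel n x} ∧
    Set.InvOn (fun (x : ZMod n → ℂ) (j : ZMod n) => x (j + 1) / x j)
      (fun (z : ZMod n → ℂ) (i : ZMod n) => ∏ t ∈ Finset.range i.val, z (t : ZMod n))
      {z | IsCyclicRoot n z} {x | IsCyclicRootXLevel n x} := by
  haveI : Fact (1 < n) := ⟨hn⟩
  have hmap1 : Set.MapsTo (fun (z : ZMod n → ℂ) (i : ZMod n) =>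
      ∏ t ∈ Finset.range i.val, z (t : ZMod n))
      {z | IsCyclicRoot n z} {x | IsCyclicRootXLevel n x} := by
    intro z hz
    obtain ⟨hsum, hprod⟩ := hz
    have hz0 : ∀ i, z i ≠ 0 := fun i hi => by
      rw [Finset.prod_eq_zero (Finset.mem_univ i) hi] at hprod
      exact zero_ne_one hprod
    refine ⟨fun i => Finset.prod_ne_zero_iff.2 fun t _ => hz0 _, by simp, fun j hj => ?_⟩
    have hjv : 1 ≤ j.val := Nat.one_le_iff_ne_zero.2 fun h => hj ((ZMod.val_eq_zero j).1 h)
    calc ∑ m : ZMod n, (∏ t ∈ Finset.range (m + j).val, z (t : ZMod n)) /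
            (∏ t ∈ Finset.range m.val, z (t : ZMod n))
        = ∑ m : ZMod n, ∏ s ∈ Finset.range j.val, z (m + (s : ZMod n)) :=
          Finset.sum_congr rfl fun m _ => mapDiv n z hprod m j
      _ = 0 := hsum j.val hjv (Nat.le_pred_of_lt (ZMod.val_lt j))
  have hmap2 : Set.MapsTo (fun (x : ZMod n → ℂ) (j : ZMod n) => x (j + 1) / x j)
      {x | IsCyclicRootXLevel n x} {z | IsCyclicRoot n z} := by
    intro x hx
    obtain ⟨hx0, hx1, hxsum⟩ := hx
    constructor
    · intro k hk1 hk2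
      have hkn : k < n := lt_of_le_of_lt hk2 (Nat.pred_lt (NeZero.ne n))
      have hk0 : (k : ZMod n) ≠ 0 := fun h => by
        rw [← ZMod.val_cast_of_lt hkn, h, ZMod.val_zero] at hk1
        omega
      calc ∑ i : ZMod n, ∏ t ∈ Finset.range k, (x (i + (t : ZMod n) + 1) / x (i + (t : ZMod n)))
          = ∑ i : ZMod n, x (i + (k : ZMod n)) / x i :=
            Finset.sum_congr rfl fun i _ => telescope n x hx0 i k
        _ = 0 := hxsum (k : ZMod n) hk0
    · rw [Finset.prod_div_distrib]
      have : ∏ i : ZMod n, x (i + 1) = ∏ i : ZMod n, x i :=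
        Fintype.prod_equiv (Equiv.addRight 1) _ _ (fun i => rfl)
      rw [this, div_self (Finset.prod_ne_zero_iff.2 fun i _ => hx0 i)]
  have hleft : Set.LeftInvOn (fun (x : ZMod n → ℂ) (j : ZMod n) => x (j + 1) / x j)
      (fun (z : ZMod n → ℂ) (i : ZMod n) => ∏ t ∈ Finset.range i.val, z (t : ZMod n))
      {z | IsCyclicRoot n z} := by
    intro z hz
    funext j
    have h := mapDiv n z hz.2 j 1
    rw [ZMod.val_one n] at h
    simpa using h
  have hright : Set.RightInvOn (fun (x : ZMod n → ℂ) (j : ZMod n) => x (j + 1) / x j)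
      (fun (z : ZMod n → ℂ) (i : ZMod n) => ∏ t ∈ Finset.range i.val, z (t : ZMod n))
      {x | IsCyclicRootXLevel n x} := by
    intro x hx
    obtain ⟨hx0, hx1, _⟩ := hx
    funext i
    have h := telescope n x hx0 0 i.val
    simp only [zero_add] at h
    rw [show ((i.val : ZMod n)) = i by simp [ZMod.natCast_val, ZMod.cast_id], hx1, div_one] at h
    exact h
  exact ⟨⟨hmap1, hleft.injOn, hright.surjOn hmap2⟩, hleft, hright⟩
end

section
/- (Chebotarëv) Let p be a prime number and let F_p be the p × p matrix with entries (F_p)_{kl} = (1/√p) e^{2πi kl/p} for 0 ≤ k, l ≤ p−1. Then for every pair of nonempty subsets K, L ⊆ {0, 1, …, p−1} of the same cardinality |K| = |L|, the submatrix ((1/√p) e^{2πi kl/p})_{k ∈ K, l ∈ L} has nonzero determinant. -/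
open scoped BigOperators

section ChebotarevAux

open Polynomial Finset Matrix

lemma pow_one_integral {x : ℂ} {n : ℕ} (hn : n ≠ 0) (h : x ^ n = 1) :
    x ∈ integralClosure ℤ ℂ := by
  refine ⟨X ^ n - C 1, Polynomial.monic_X_pow_sub_C 1 hn, ?_⟩
  simp [h, sub_eq_zero]

lemma key_dvd {p : ℕ} (hp : p.Prime) {ζ : ℂ} (hζ : IsPrimitiveRoot ζ p)
    {c : ℤ} {z : ℂ} (hz : z ∈ integralClosure ℤ ℂ)
    (h : (c : ℂ) = (ζ - 1) * z) : (p : ℤ) ∣ c := by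
  haveI : Fact p.Prime := ⟨hp⟩
  have hp0 : p ≠ 0 := hp.ne_zero
  -- each primitive root divides 1 - ζ with integral quotient
  have step : ∀ μ ∈ primitiveRoots p ℂ, ∃ g ∈ integralClosure ℤ ℂ,
      (1 - ζ) = (1 - μ) * g := by
    intro μ hμmem
    have hμ : IsPrimitiveRoot μ p := isPrimitiveRoot_of_mem_primitiveRoots hμmem
    obtain ⟨e, -, he⟩ := hμ.eq_pow_of_pow_eq_one hζ.pow_eq_one
    refine ⟨∑ i ∈ range e, μ ^ i, ?_, ?_⟩
    · exact Subalgebra.sum_mem _ fun i _ => Subalgebra.pow_mem _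
        (pow_one_integral hp0 hμ.pow_eq_one) i
    · have := geom_sum_mul μ e
      have h2 : (∑ i ∈ range e, μ ^ i) * (μ - 1) = ζ - 1 := by rw [this, he]
      calc (1 : ℂ) - ζ = -(ζ - 1) := by ring
        _ = -((∑ i ∈ range e, μ ^ i) * (μ - 1)) := by rw [h2]
        _ = (1 - μ) * (∑ i ∈ range e, μ ^ i) := by ring
  choose g hg hgeq using step
  -- product over primitive roots
  have hprod : ∏ μ ∈ (primitiveRoots p ℂ).attach, (1 - (μ : ℂ)) = (p : ℂ) := by
    have h1 : eval 1 (cyclotomic p ℂ) = ∏ μ ∈ primitiveRoots p ℂ, (1 - μ) := by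
      rw [cyclotomic_eq_prod_X_sub_primitiveRoots hζ, eval_prod]
      simp
    have h2 : eval 1 (cyclotomic p ℂ) = (p : ℂ) := by
      simpa using eval_one_cyclotomic_prime (R := ℂ) (p := p)
    rw [Finset.prod_attach _ (fun μ => (1 - μ))]
    rw [← h1, h2]
  have hcard : (primitiveRoots p ℂ).card = p - 1 := by
    rw [hζ.card_primitiveRoots, Nat.totient_prime hp]
  -- (1 - ζ)^(p-1) = p * G
  set G : ℂ := ∏ μ ∈ (primitiveRoots p ℂ).attach, g μ μ.2 with hG
  have hGmem : G ∈ integralClosure ℤ ℂ :=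
    Subalgebra.prod_mem _ fun μ _ => hg μ μ.2
  have hpow : (1 - ζ) ^ (p - 1) = (p : ℂ) * G := by
    calc (1 - ζ) ^ (p - 1) = ∏ _μ ∈ (primitiveRoots p ℂ).attach, (1 - ζ) := by
          rw [Finset.prod_const, Finset.card_attach, hcard]
      _ = ∏ μ ∈ (primitiveRoots p ℂ).attach, ((1 - (μ : ℂ)) * g μ μ.2) := by
          exact Finset.prod_congr rfl fun μ _ => hgeq μ μ.2
      _ = (∏ μ ∈ (primitiveRoots p ℂ).attach, (1 - (μ : ℂ))) * G := by
          rw [hG, Finset.prod_mul_distrib]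
      _ = (p : ℂ) * G := by rw [hprod]
  -- c^(p-1) = p * w with w integral
  set w : ℂ := (-1) ^ (p - 1) * G * z ^ (p - 1) with hw
  have hwmem : w ∈ integralClosure ℤ ℂ := by
    refine Subalgebra.mul_mem _ (Subalgebra.mul_mem _ ?_ hGmem) (Subalgebra.pow_mem _ hz _)
    exact Subalgebra.pow_mem _ (Subalgebra.neg_mem _ (Subalgebra.one_mem _)) _
  have hcpow : ((c ^ (p - 1) : ℤ) : ℂ) = (p : ℂ) * w := by
    push_cast
    rw [h, mul_pow]
    have : (ζ - 1) ^ (p - 1) = (-1) ^ (p - 1) * (1 - ζ) ^ (p - 1) := by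
      rw [← neg_sub 1 ζ, neg_pow]
    rw [this, hpow, hw]; ring
  -- conclude rationality
  have hpne : (p : ℂ) ≠ 0 := by exact_mod_cast hp0
  have hcpow' : (c : ℂ) ^ (p - 1) = (p : ℂ) * w := by
    have := hcpow; push_cast at this; exact this
  set q : ℚ := ((c ^ (p - 1) : ℤ) : ℚ) / (p : ℚ) with hqdef
  have hqc : ((q : ℚ) : ℂ) = w := by
    rw [hqdef]; push_cast; rw [hcpow']; field_simp
  have hqint : IsIntegral ℤ q := by
    have h1 : IsIntegral ℤ ((q : ℚ) : ℂ) := by rw [hqc]; exact hwmem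
    have h2 : algebraMap ℚ ℂ q = ((q : ℚ) : ℂ) := eq_ratCast _ q
    rw [← h2] at h1
    exact (isIntegral_algebraMap_iff (algebraMap ℚ ℂ).injective).mp h1
  obtain ⟨y, hy⟩ := IsIntegrallyClosed.isIntegral_iff.mp hqint
  have hy' : (y : ℚ) = q := hy
  have hpq : ((c ^ (p - 1) : ℤ) : ℚ) = (((p : ℤ) * y : ℤ) : ℚ) := by
    have hpq0 : (p : ℚ) ≠ 0 := by exact_mod_cast hp0
    rw [hqdef] at hy'
    push_cast
    field_simp at hy'
    push_cast at hy'
    linarith [hy']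
  have hfin : c ^ (p - 1) = (p : ℤ) * y := by exact_mod_cast hpq
  have hdvd : (p : ℤ) ∣ c ^ (p - 1) := ⟨y, hfin⟩
  exact (Nat.prime_iff_prime_int.mp hp).dvd_of_dvd_pow hdvd

lemma descPoch_coeff_cast (t u : ℕ) :
    (descPochhammer ℂ t).coeff u = ((descPochhammer ℤ t).coeff u : ℂ) := by
  rw [← descPochhammer_map (Int.castRingHom ℂ) t, coeff_map]
  simp

-- binomial coefficient as polynomial combination, over ℂ
lemma choose_expand (t s : ℕ) (hts : t ≤ s) (n : ℕ) :
    ((n.choose t : ℕ) : ℂ) = (t.factorial : ℂ)⁻¹ *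
      ∑ u ∈ range (s + 1), ((descPochhammer ℤ t).coeff u : ℂ) * (n : ℂ) ^ u := by
  have hdeg : (descPochhammer ℂ t).natDegree < s + 1 := by
    rw [descPochhammer_natDegree]; omega
  have heval : (descPochhammer ℂ t).eval (n : ℂ) =
      ∑ u ∈ range (s + 1), (descPochhammer ℂ t).coeff u * (n : ℂ) ^ u :=
    Polynomial.eval_eq_sum_range' hdeg _
  have hdesc : (descPochhammer ℂ t).eval (n : ℂ) = (n.descFactorial t : ℂ) := by
    exact_mod_cast descPochhammer_eval_eq_descFactorial ℂ n t
  have hfac : (n.descFactorial t : ℂ) = (t.factorial : ℂ) * (n.choose t : ℂ) := by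
    exact_mod_cast congrArg (Nat.cast : ℕ → ℂ) (Nat.descFactorial_eq_factorial_mul_choose n t)
  have hfne : (t.factorial : ℂ) ≠ 0 := by
    exact_mod_cast Nat.factorial_ne_zero t
  rw [eq_inv_mul_iff_mul_eq₀ hfne, ← hfac, ← hdesc, heval]
  exact Finset.sum_congr rfl fun u _ => by rw [descPoch_coeff_cast]

-- vanishing lemma
lemma det_vanish (m : ℕ) (a b : Fin m → ℕ) (r : Fin m → ℕ) (s : ℕ)
    (hs : s + 2 ≤ (univ.filter (fun j => r j ≤ s)).card) :
    (Matrix.of fun j i : Fin m => ((a i * b j).choose (r j) : ℂ)).det = 0 := by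
  classical
  rw [← Matrix.exists_vecMul_eq_zero_iff]
  set M : Matrix (Fin m) (Fin m) ℂ := Matrix.of fun j i => ((a i * b j).choose (r j) : ℂ)
  set S : Finset (Fin m) := univ.filter fun j => r j ≤ s with hS
  set w : Fin (s + 1) → (Fin m → ℂ) := fun u i => (a i : ℂ) ^ (u : ℕ) with hwdef
  have hrow : ∀ j ∈ S, M j ∈ Submodule.span ℂ (Set.range w) := by
    intro j hj
    have hrj : r j ≤ s := by simpa [hS] using hj
    have : M j = ∑ u : Fin (s + 1),
        (((r j).factorial : ℂ)⁻¹ * ((descPochhammer ℤ (r j)).coeff u : ℂ) * (b j : ℂ) ^ (u : ℕ)) • w u := by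
      funext i
      rw [Finset.sum_apply]
      have := choose_expand (r j) s hrj (a i * b j)
      simp only [M, Matrix.of_apply, this]
      rw [Finset.mul_sum, ← Fin.sum_univ_eq_sum_range
        (fun u => ((r j).factorial : ℂ)⁻¹ * (((descPochhammer ℤ (r j)).coeff u : ℂ) * ((a i * b j : ℕ) : ℂ) ^ u)) (s+1)]
      refine Finset.sum_congr rfl fun u _ => ?_
      simp only [Pi.smul_apply, smul_eq_mul, hwdef]
      push_cast
      ring
    rw [this]
    exact Submodule.sum_mem _ fun u _ => Submodule.smul_mem _ _
      (Submodule.subset_span (Set.mem_range_self u))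
  -- the rows indexed by S are linearly dependent
  have hnli : ¬ LinearIndependent ℂ (fun j : S => M j) := by
    intro hli
    have h1 : Module.finrank ℂ (Submodule.span ℂ (Set.range (fun j : S => M (j : Fin m)))) =
        Fintype.card S := finrank_span_eq_card hli
    have h2 : Submodule.span ℂ (Set.range (fun j : S => M (j : Fin m))) ≤
        Submodule.span ℂ (Set.range w) := by
      rw [Submodule.span_le]
      rintro x ⟨j, rfl⟩
      exact hrow j j.2
    have h3 : Module.finrank ℂ (Submodule.span ℂ (Set.range w)) ≤ s + 1 := by
      have := finrank_span_le_card (R := ℂ) (Set.range w)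
      refine le_trans this ?_
      rw [Set.toFinset_range]
      exact le_trans (Finset.card_image_le) (by simp)
    have h4 := Submodule.finrank_mono h2
    rw [h1] at h4
    have h5 : Fintype.card S = S.card := Fintype.card_coe S
    omega
  obtain ⟨g, hgsum, j₀, hj₀⟩ := Fintype.not_linearIndependent_iff.mp hnli
  refine ⟨fun j => if h : j ∈ S then g ⟨j, h⟩ else 0, ?_, ?_⟩
  · intro hv0
    apply hj₀
    have := congrFun hv0 (j₀ : Fin m)
    simpa [j₀.2] using this
  · funext i
    show (∑ j : Fin m, (if h : j ∈ S then g ⟨j, h⟩ else 0) * M j i) = (0 : ℂ)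
    have key : ∑ j ∈ S.attach, g j * M (j : Fin m) i = 0 := by
      have h0 := congrFun hgsum i
      rw [Finset.sum_apply] at h0
      simp only [Pi.smul_apply, smul_eq_mul, Pi.zero_apply] at h0
      rw [← h0, Finset.univ_eq_attach]
    have hsplit : ∑ j : Fin m, (if h : j ∈ S then g ⟨j, h⟩ else 0) * M j i
        = ∑ j ∈ S, (if h : j ∈ S then g ⟨j, h⟩ else 0) * M j i := by
      refine (Finset.sum_subset (Finset.subset_univ S) ?_).symm
      intro j _ hj
      simp [hj]
    rw [hsplit, ← Finset.sum_attach S (fun j => (if h : j ∈ S then g ⟨j, h⟩ else 0) * M j i),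
      ← key]
    exact Finset.sum_congr rfl fun j _ => by simp [j.2]

lemma comb_lemma (m T : ℕ) (r : Fin m → ℕ) (hbd : ∀ j, r j ≤ T)
    (H : ∀ s : ℕ, (univ.filter (fun j => r j ≤ s)).card ≤ s + 1)
    (hns : ¬ ∃ σ : Equiv.Perm (Fin m), ∀ j, r j = (σ j : ℕ)) :
    (∑ j : Fin m, (j : ℕ)) + 1 ≤ ∑ j, r j := by
  classical
  rcases Nat.eq_zero_or_pos m with hm0 | hm0
  · subst hm0; exact absurd ⟨1, fun j => j.elim0⟩ hns
  set K := T + m + 1 with hK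
  set cardA : ℕ → ℕ := fun s => (univ.filter (fun j => r j ≤ s)).card with hcardA
  have hcardAm : ∀ s, cardA s ≤ m := fun s => le_trans (card_filter_le _ _) (by simp)
  set f : ℕ → ℕ := fun s => m - cardA s with hf
  set g : ℕ → ℕ := fun s => m - min (s + 1) m with hg
  -- claim 1 : total sum via layers
  have hcompl : ∀ s, cardA s + (univ.filter (fun j => s < r j)).card = m := by
    intro s
    rw [hcardA]
    have := Finset.card_filter_add_card_filter_not (s := (univ : Finset (Fin m)))
      (p := fun j => r j ≤ s)
    simp only [Finset.card_univ, Fintype.card_fin] at this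
    have h2 : (univ.filter (fun a => ¬ r a ≤ s)) = (univ.filter (fun j => s < r j)) :=
      Finset.filter_congr fun j _ => by omega
    rw [← h2]
    exact this
  have claim1 : ∑ j, r j = ∑ s ∈ range K, f s := by
    have h1 : ∀ s, f s = (univ.filter (fun j => s < r j)).card := by
      intro s; simp only [hf]; have := hcompl s; omega
    rw [Finset.sum_congr rfl fun s _ => h1 s]
    have h2 : ∀ s, (univ.filter (fun j => s < r j)).card
        = ∑ j : Fin m, (if s < r j then 1 else 0) := fun s => Finset.card_filter _ _
    rw [Finset.sum_congr rfl fun s _ => h2 s, Finset.sum_comm]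
    refine (Finset.sum_congr rfl fun j _ => ?_).symm
    have hsub : range (r j) ⊆ range K := by
      apply Finset.range_subset_range.2; have := hbd j; omega
    rw [show (r j) = ∑ s ∈ range (r j), 1 by simp]
    refine (Finset.sum_subset hsub ?_).symm.trans (Finset.sum_congr rfl fun s hs => ?_)
    · intro s _ hs; simp only [Finset.mem_range, not_lt] at hs; simp [Nat.not_lt.2 hs]
    · simp [Finset.mem_range.1 hs]
  -- claim 2 : sum of g
  have claim2 : ∑ s ∈ range K, g s = ∑ j : Fin m, (j : ℕ) := by
    have hsub : range m ⊆ range K := Finset.range_subset_range.2 (by omega)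
    have hzero : ∀ s ∈ range K, s ∉ range m → g s = 0 := by
      intro s _ hs
      simp only [Finset.mem_range, not_lt] at hs
      simp only [hg]
      have : min (s + 1) m = m := by omega
      rw [this, Nat.sub_self]
    rw [← Finset.sum_subset hsub hzero]
    have : ∀ s ∈ range m, g s = m - 1 - s := by
      intro s hs
      simp only [Finset.mem_range] at hs
      simp only [hg]
      have : min (s + 1) m = s + 1 := by omega
      rw [this]; omega
    rw [Finset.sum_congr rfl this, Finset.sum_range_reflect (fun s => s) m,
      Fin.sum_univ_eq_sum_range (fun s => s) m]
  -- pointwise inequality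
  have hle : ∀ s ∈ range K, g s ≤ f s := by
    intro s _
    simp only [hf, hg]
    have h1 : cardA s ≤ min (s + 1) m := le_min (H s) (hcardAm s)
    omega
  have hsums : ∑ j : Fin m, (j : ℕ) ≤ ∑ j, r j := by
    rw [claim1, ← claim2]; exact Finset.sum_le_sum hle
  rcases Nat.lt_or_ge (∑ j : Fin m, (j : ℕ)) (∑ j, r j) with h | h
  · omega
  have heq : ∑ j, r j = ∑ j : Fin m, (j : ℕ) := le_antisymm h hsums
  exfalso
  -- equality case : construct a permutation
  have hptwise : ∀ s ∈ range K, f s = g s := by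
    by_contra hcon
    push_neg at hcon
    obtain ⟨s₀, hs₀, hne⟩ := hcon
    have : ∑ s ∈ range K, g s < ∑ s ∈ range K, f s :=
      Finset.sum_lt_sum hle ⟨s₀, hs₀, lt_of_le_of_ne (hle s₀ hs₀) (Ne.symm hne)⟩
    rw [claim2, ← claim1] at this
    omega
  have hcA : ∀ s ∈ range K, cardA s = min (s + 1) m := by
    intro s hs
    have h1 := hptwise s hs
    have h2 := hcardAm s
    have h3 : min (s + 1) m ≤ m := min_le_right _ _
    simp only [hf, hg] at h1
    omega
  have hrlt : ∀ j, r j < m := by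
    have hmem : m - 1 ∈ range K := by simp [hK]; omega
    have h1 : cardA (m - 1) = m := by rw [hcA _ hmem]; omega
    have h2 : (univ.filter (fun j => r j ≤ m - 1)) = univ := by
      apply Finset.eq_univ_of_card
      rw [hcardA] at h1
      simpa using h1
    intro j
    have := Finset.mem_filter.1 (h2 ▸ Finset.mem_univ j)
    omega
  have hone : ∀ s, s < m → (univ.filter (fun j => r j = s)).card = 1 := by
    intro s hsm
    rcases Nat.eq_zero_or_pos s with rfl | hs1
    · have : (univ.filter (fun j => r j = 0)) = (univ.filter (fun j => r j ≤ 0)) :=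
        Finset.filter_congr fun j _ => by omega
      rw [this]
      have := hcA 0 (by simp [hK])
      rw [hcardA] at this
      simp only at this
      rw [this]; omega
    · have hsplit : (univ.filter (fun j => r j = s))
          = (univ.filter (fun j => r j ≤ s)) \ (univ.filter (fun j => r j ≤ s - 1)) := by
        ext j
        simp only [Finset.mem_filter, Finset.mem_sdiff, Finset.mem_univ, true_and]
        omega
      have hsub2 : (univ.filter (fun j => r j ≤ s - 1)) ⊆ (univ.filter (fun j => r j ≤ s)) := by
        intro j hj
        simp only [Finset.mem_filter, Finset.mem_univ, true_and] at hj ⊢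
        omega
      rw [hsplit, Finset.card_sdiff_of_subset hsub2]
      have e1 := hcA s (by simp [hK]; omega)
      have e2 := hcA (s - 1) (by simp [hK]; omega)
      rw [hcardA] at e1 e2
      simp only at e1 e2
      rw [e1, e2]
      omega
  have hinj : Function.Injective r := by
    intro j j' hjj
    by_contra hne
    have hmem : j ∈ univ.filter (fun i => r i = r j) := by simp
    have hmem' : j' ∈ univ.filter (fun i => r i = r j) := by simp [hjj]
    have hsubu : ({j, j'} : Finset (Fin m)) ⊆ univ.filter (fun i => r i = r j) := by
      intro x hx
      rcases Finset.mem_insert.1 hx with rfl | hx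
      · exact hmem
      · rw [Finset.mem_singleton.1 hx]; exact hmem'
    have h2 : ({j, j'} : Finset (Fin m)).card = 2 := by
      rw [Finset.card_insert_of_notMem (by simpa using hne), Finset.card_singleton]
    have := Finset.card_le_card hsubu
    rw [h2, hone (r j) (hrlt j)] at this
    omega
  set u : Fin m → Fin m := fun j => ⟨r j, hrlt j⟩ with hu
  have huinj : Function.Injective u := fun j j' hjj => hinj (by
    have := congrArg (Fin.val) hjj; simpa [hu] using this)
  have hubij : Function.Bijective u := (Finite.injective_iff_bijective).1 huinj
  exact hns ⟨Equiv.ofBijective u hubij, fun j => rfl⟩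

-- a permutation moving everything weakly up is the identity
lemma perm_eq_one_of_le {m : ℕ} (π : Equiv.Perm (Fin m)) (h : ∀ u : Fin m, (u : ℕ) ≤ ((π u : Fin m) : ℕ)) :
    π = 1 := by
  have hsum : ∑ u : Fin m, ((π u : Fin m) : ℕ) = ∑ u : Fin m, (u : ℕ) :=
    Equiv.sum_comp π (fun u => (u : ℕ))
  have hpt : ∀ u : Fin m, ((π u : Fin m) : ℕ) = (u : ℕ) := by
    by_contra hcon
    push_neg at hcon
    obtain ⟨u₀, hu₀⟩ := hcon
    have : ∑ u : Fin m, (u : ℕ) < ∑ u : Fin m, ((π u : Fin m) : ℕ) :=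
      Finset.sum_lt_sum (fun u _ => h u)
        ⟨u₀, Finset.mem_univ _, lt_of_le_of_ne (h u₀) (Ne.symm hu₀)⟩
    omega
  ext u
  exact hpt u

lemma perm_sum_d {m : ℕ} :
    ∑ π : Equiv.Perm (Fin m), ∏ u : Fin m,
      (descPochhammer ℤ ((π u : Fin m) : ℕ)).coeff (u : ℕ) = 1 := by
  rw [Finset.sum_eq_single (1 : Equiv.Perm (Fin m))]
  · rw [show (1 : ℤ) = ∏ u : Fin m, 1 by simp]
    refine Finset.prod_congr rfl fun u _ => ?_
    have hdeg : (descPochhammer ℤ (((1 : Equiv.Perm (Fin m)) u : Fin m) : ℕ)).natDegree = (u : ℕ) := by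
      rw [descPochhammer_natDegree]; rfl
    rw [← hdeg, Polynomial.coeff_natDegree]
    exact (monic_descPochhammer ℤ _).leadingCoeff
  · intro π _ hπ
    have : ∃ u : Fin m, ((π u : Fin m) : ℕ) < (u : ℕ) := by
      by_contra hcon
      push_neg at hcon
      exact hπ (perm_eq_one_of_le π hcon)
    obtain ⟨u, hu⟩ := this
    refine Finset.prod_eq_zero (Finset.mem_univ u) ?_
    refine Polynomial.coeff_eq_zero_of_natDegree_lt ?_
    rw [descPochhammer_natDegree]
    exact hu
  · intro h; exact absurd (Finset.mem_univ _) h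

lemma sum_det_B {m : ℕ} (b : Fin m → ℕ) :
    ∑ σ : Equiv.Perm (Fin m),
      (Matrix.of fun j u : Fin m =>
        (descPochhammer ℤ ((σ j : Fin m) : ℕ)).coeff (u : ℕ) * (b j : ℤ) ^ (u : ℕ)).det
    = (Matrix.vandermonde (fun i => (b i : ℤ))).det := by
  have hdet : ∀ σ : Equiv.Perm (Fin m),
      (Matrix.of fun j u : Fin m =>
        (descPochhammer ℤ ((σ j : Fin m) : ℕ)).coeff (u : ℕ) * (b j : ℤ) ^ (u : ℕ)).det
      = ∑ τ : Equiv.Perm (Fin m), Equiv.Perm.sign τ •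
          ((∏ u : Fin m, (descPochhammer ℤ ((σ (τ u) : Fin m) : ℕ)).coeff (u : ℕ))
            * ∏ u : Fin m, (b (τ u) : ℤ) ^ (u : ℕ)) := by
    intro σ
    rw [Matrix.det_apply]
    refine Finset.sum_congr rfl fun τ _ => ?_
    rw [← Finset.prod_mul_distrib]
    rfl
  rw [Finset.sum_congr rfl fun σ _ => hdet σ, Finset.sum_comm]
  have hinner : ∀ τ : Equiv.Perm (Fin m),
      (∑ σ : Equiv.Perm (Fin m), Equiv.Perm.sign τ •
        ((∏ u : Fin m, (descPochhammer ℤ ((σ (τ u) : Fin m) : ℕ)).coeff (u : ℕ))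
          * ∏ u : Fin m, (b (τ u) : ℤ) ^ (u : ℕ)))
      = Equiv.Perm.sign τ • ∏ u : Fin m, (b (τ u) : ℤ) ^ (u : ℕ) := by
    intro τ
    rw [← Finset.smul_sum, ← Finset.sum_mul]
    have hre : ∑ σ : Equiv.Perm (Fin m),
        ∏ u : Fin m, (descPochhammer ℤ ((σ (τ u) : Fin m) : ℕ)).coeff (u : ℕ)
        = ∑ π : Equiv.Perm (Fin m),
            ∏ u : Fin m, (descPochhammer ℤ ((π u : Fin m) : ℕ)).coeff (u : ℕ) := by
      refine Fintype.sum_equiv (Equiv.mulRight τ) _ _ fun σ => ?_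
      refine Finset.prod_congr rfl fun u _ => ?_
      rfl
    rw [hre, perm_sum_d, one_mul]
  rw [Finset.sum_congr rfl fun τ _ => hinner τ, Matrix.det_apply]
  refine Finset.sum_congr rfl fun τ _ => ?_
  congr 1

lemma det_C_factor {m : ℕ} (a b : Fin m → ℕ) (σ : Equiv.Perm (Fin m)) :
    (∏ t ∈ range m, (t.factorial : ℤ)) *
      (Matrix.of fun j i : Fin m => (((a i * b j).choose ((σ j : Fin m) : ℕ) : ℕ) : ℤ)).det
    = (Matrix.of fun j u : Fin m =>
        (descPochhammer ℤ ((σ j : Fin m) : ℕ)).coeff (u : ℕ) * (b j : ℤ) ^ (u : ℕ)).det *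
      (Matrix.vandermonde (fun i => (a i : ℤ))).det := by
  have h1 : (∏ t ∈ range m, (t.factorial : ℤ))
      = ∏ j : Fin m, ((((σ j : Fin m) : ℕ)).factorial : ℤ) := by
    rw [← Fin.prod_univ_eq_prod_range (fun t => (t.factorial : ℤ)) m]
    exact (Equiv.prod_comp σ fun t => (((t : Fin m) : ℕ).factorial : ℤ)).symm
  rw [h1, ← Matrix.det_mul_column]
  have h2 : (Matrix.of fun j i : Fin m =>
      ((((σ j : Fin m) : ℕ)).factorial : ℤ) * (((a i * b j).choose ((σ j : Fin m) : ℕ) : ℕ) : ℤ))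
      = (Matrix.of fun j u : Fin m =>
          (descPochhammer ℤ ((σ j : Fin m) : ℕ)).coeff (u : ℕ) * (b j : ℤ) ^ (u : ℕ)) *
        (Matrix.of fun u i : Fin m => (a i : ℤ) ^ (u : ℕ)) := by
    ext j i
    rw [Matrix.mul_apply]
    simp only [Matrix.of_apply]
    have e1 : ((((σ j : Fin m) : ℕ)).factorial : ℤ) * (((a i * b j).choose ((σ j : Fin m) : ℕ) : ℕ) : ℤ)
        = (((a i * b j).descFactorial ((σ j : Fin m) : ℕ) : ℕ) : ℤ) := by
      exact_mod_cast (congrArg (Nat.cast : ℕ → ℤ)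
        (Nat.descFactorial_eq_factorial_mul_choose (a i * b j) ((σ j : Fin m) : ℕ))).symm
    rw [e1, ← descPochhammer_eval_eq_descFactorial ℤ (a i * b j) ((σ j : Fin m) : ℕ)]
    have hdeg : (descPochhammer ℤ ((σ j : Fin m) : ℕ)).natDegree < m := by
      rw [descPochhammer_natDegree]; exact (σ j).2
    rw [Polynomial.eval_eq_sum_range' hdeg ((a i * b j : ℕ) : ℤ),
      ← Fin.sum_univ_eq_sum_range
        (fun u => (descPochhammer ℤ ((σ j : Fin m) : ℕ)).coeff u * ((a i * b j : ℕ) : ℤ) ^ u) m]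
    refine Finset.sum_congr rfl fun u _ => ?_
    push_cast
    ring
  simp only [Matrix.of_apply]
  rw [h2, Matrix.det_mul]
  congr 1
  rw [show (Matrix.of fun u i : Fin m => (a i : ℤ) ^ (u : ℕ))
      = (Matrix.vandermonde (fun i => (a i : ℤ)))ᵀ from rfl, Matrix.det_transpose]

lemma c_not_dvd (p : ℕ) (hp : p.Prime) (m : ℕ) (hm : m ≤ p) (a b : Fin m → ℕ)
    (ha : Function.Injective a) (hb : Function.Injective b)
    (halt : ∀ i, a i < p) (hblt : ∀ i, b i < p) :
    ¬ ((p : ℤ) ∣ ∑ σ : Equiv.Perm (Fin m),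
      (Matrix.of fun j i : Fin m => (((a i * b j).choose ((σ j : Fin m) : ℕ) : ℕ) : ℤ)).det) := by
  haveI : Fact p.Prime := ⟨hp⟩
  intro hdvd
  set c : ℤ := ∑ σ : Equiv.Perm (Fin m),
    (Matrix.of fun j i : Fin m => (((a i * b j).choose ((σ j : Fin m) : ℕ) : ℕ) : ℤ)).det with hc
  have key : (∏ t ∈ range m, (t.factorial : ℤ)) * c
      = (Matrix.vandermonde (fun i => (b i : ℤ))).det
        * (Matrix.vandermonde (fun i => (a i : ℤ))).det := by
    rw [hc, Finset.mul_sum, Finset.sum_congr rfl fun σ _ => det_C_factor a b σ,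
      ← Finset.sum_mul, sum_det_B]
  -- move to ZMod p
  have hvand : ∀ v : Fin m → ℕ, Function.Injective v → (∀ i, v i < p) →
      (((Matrix.vandermonde (fun i => (v i : ℤ))).det : ℤ) : ZMod p) ≠ 0 := by
    intro v hv hvlt
    have hmap : (((Matrix.vandermonde (fun i => (v i : ℤ))).det : ℤ) : ZMod p)
        = (Matrix.vandermonde (fun i => (v i : ZMod p))).det := by
      rw [show ((((Matrix.vandermonde (fun i => (v i : ℤ))).det : ℤ)) : ZMod p)
        = (Int.castRingHom (ZMod p)) (Matrix.vandermonde (fun i => (v i : ℤ))).det from rfl,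
        RingHom.map_det]
      congr 1
      ext i j
      simp [Matrix.vandermonde_apply]
    rw [hmap, Matrix.det_vandermonde]
    refine Finset.prod_ne_zero_iff.2 fun i _ => Finset.prod_ne_zero_iff.2 fun j hj => ?_
    refine sub_ne_zero.2 fun hij => ?_
    have : v j = v i := by
      have h1 := congrArg ZMod.val hij
      rwa [ZMod.val_cast_of_lt (hvlt j), ZMod.val_cast_of_lt (hvlt i)] at h1
    have : j = i := hv this
    rw [this] at hj
    exact absurd (Finset.mem_Ioi.1 hj) (lt_irrefl i)
  have hfact : ((∏ t ∈ range m, (t.factorial : ℤ) : ℤ) : ZMod p) ≠ 0 := by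
    push_cast
    refine Finset.prod_ne_zero_iff.2 fun t ht => ?_
    rw [Ne, ZMod.natCast_eq_zero_iff]
    intro hdvd'
    have := (Nat.Prime.dvd_factorial hp).1 hdvd'
    have := Finset.mem_range.1 ht
    omega
  have hc0 : ((c : ℤ) : ZMod p) = 0 := (ZMod.intCast_zmod_eq_zero_iff_dvd c p).2 hdvd
  have := congrArg (fun x : ℤ => (x : ZMod p)) key
  simp only [Int.cast_mul, hc0, mul_zero] at this
  exact (mul_ne_zero (hvand b hb hblt) (hvand a ha halt)) this.symm

theorem det_zeta_ne_zero (p : ℕ) (hp : p.Prime) {ζ : ℂ} (hζ : IsPrimitiveRoot ζ p)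
    (m : ℕ) (a b : Fin m → ℕ) (ha : Function.Injective a) (hb : Function.Injective b)
    (halt : ∀ i, a i < p) (hblt : ∀ i, b i < p) :
    (Matrix.of fun i j : Fin m => ζ ^ (a i * b j)).det ≠ 0 := by
  classical
  intro hdet0
  have hζp : ζ ^ p = 1 := hζ.pow_eq_one
  have hζint : ζ ∈ integralClosure ℤ ℂ := pow_one_integral hp.ne_zero hζp
  have hlamne : ζ - 1 ≠ 0 := sub_ne_zero.2 (hζ.ne_one hp.one_lt)
  have hm : m ≤ p := by
    have h1 : Function.Injective (fun i : Fin m => (⟨a i, halt i⟩ : Fin p)) := by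
      intro i j hij
      exact ha (congrArg Fin.val hij)
    simpa using Fintype.card_le_of_injective _ h1
  set T := p * p with hT
  have hmT : m ≤ T + 1 := by
    have : p ≤ p * p := Nat.le_mul_of_pos_left p hp.pos
    omega
  have hbd : ∀ i j : Fin m, a i * b j < T + 1 := by
    intro i j
    have h1 := Nat.mul_le_mul (Nat.succ_le_of_lt (halt i)) (Nat.succ_le_of_lt (hblt j))
    rw [Nat.succ_mul_succ] at h1
    omega
  set lam : ℂ := ζ - 1 with hlam
  -- entrywise binomial expansion
  have hentry : ∀ i j : Fin m, ζ ^ (a i * b j)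
      = ∑ t ∈ range (T + 1), ((a i * b j).choose t : ℂ) * lam ^ t := by
    intro i j
    set n := a i * b j with hn
    have h1 : ζ ^ n = (lam + 1) ^ n := by rw [hlam]; ring_nf
    rw [h1, add_pow]
    have h2 : ∑ t ∈ range (n + 1), lam ^ t * 1 ^ (n - t) * (n.choose t : ℂ)
        = ∑ t ∈ range (n + 1), ((n.choose t : ℂ)) * lam ^ t :=
      Finset.sum_congr rfl fun t _ => by ring
    rw [h2]
    refine Finset.sum_subset (Finset.range_subset_range.2 (hbd i j)) ?_
    intro t _ ht
    rw [Finset.mem_range, not_lt] at ht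
    rw [Nat.choose_eq_zero_of_lt (by omega)]
    simp
  -- transpose
  set Mt : Matrix (Fin m) (Fin m) ℂ := Matrix.of fun j i => ζ ^ (a i * b j) with hMt
  have hMtdet : Mt.det = 0 := by
    rw [← Matrix.det_transpose Mt,
      show Mtᵀ = Matrix.of fun i j : Fin m => ζ ^ (a i * b j) from rfl]
    exact hdet0
  -- multilinear expansion of the determinant
  set g : Fin m → ℕ → (Fin m → ℂ) :=
    fun j t => fun i => ((a i * b j).choose t : ℂ) * lam ^ t with hg
  set S : Finset (Fin m → ℕ) := Fintype.piFinset (fun _ : Fin m => range (T + 1)) with hS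
  have hexp : Mt.det = ∑ r ∈ S,
      (Matrix.of fun j i => ((a i * b j).choose (r j) : ℂ) * lam ^ (r j)).det := by
    have h0 : (fun j => Mt j) = fun j => ∑ t ∈ range (T + 1), g j t := by
      funext j
      funext i
      rw [Finset.sum_apply]
      exact hentry i j
    calc Mt.det = (Matrix.detRowAlternating (R := ℂ) (n := Fin m)).toMultilinearMap
          (fun j => ∑ t ∈ range (T + 1), g j t) := by rw [← h0]; rfl
      _ = ∑ r ∈ Fintype.piFinset (fun _ : Fin m => range (T + 1)),
          (Matrix.detRowAlternating (R := ℂ) (n := Fin m)).toMultilinearMap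
            (fun j => g j (r j)) :=
        MultilinearMap.map_sum_finset _ g (fun _ => range (T + 1))
      _ = ∑ r ∈ S,
          (Matrix.of fun j i => ((a i * b j).choose (r j) : ℂ) * lam ^ (r j)).det := rfl
  -- determinant over ℤ and over ℂ
  set DZ : (Fin m → ℕ) → ℤ := fun r =>
    (Matrix.of fun j i : Fin m => (((a i * b j).choose (r j) : ℕ) : ℤ)).det with hDZ
  set Dc : (Fin m → ℕ) → ℂ := fun r =>
    (Matrix.of fun j i : Fin m => ((a i * b j).choose (r j) : ℂ)).det with hDc
  have hDZc : ∀ r, ((DZ r : ℤ) : ℂ) = Dc r := by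
    intro r
    rw [hDZ, hDc]
    rw [show (((Matrix.of fun j i : Fin m => (((a i * b j).choose (r j) : ℕ) : ℤ)).det : ℤ) : ℂ)
      = (Int.castRingHom ℂ) (Matrix.of fun j i : Fin m => (((a i * b j).choose (r j) : ℕ) : ℤ)).det
      from rfl, RingHom.map_det]
    apply congrArg Matrix.det
    ext j i
    simp [Matrix.map_apply]
  -- scaling each term
  have hscale : ∀ r : Fin m → ℕ,
      (Matrix.of fun j i => ((a i * b j).choose (r j) : ℂ) * lam ^ (r j)).det
      = lam ^ (∑ j, r j) * Dc r := by
    intro r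
    rw [← Finset.prod_pow_eq_pow_sum, ← Matrix.det_mul_column (fun j => lam ^ (r j))]
    congr 1
    ext j i
    simp only [Matrix.of_apply]
    ring
  rw [Finset.sum_congr rfl fun r _ => hscale r] at hexp
  -- split the sum over permutation patterns
  set isperm : (Fin m → ℕ) → Prop := fun r => ∃ σ : Equiv.Perm (Fin m), ∀ j, r j = (σ j : ℕ)
    with hisperm
  set N : ℕ := ∑ j : Fin m, (j : ℕ) with hN
  have hsplit : Mt.det = (∑ r ∈ S.filter isperm, lam ^ (∑ j, r j) * Dc r)
      + ∑ r ∈ S.filter (fun r => ¬ isperm r), lam ^ (∑ j, r j) * Dc r := by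
    rw [hexp, Finset.sum_filter_add_sum_filter_not]
  -- permutation part
  set ι : Equiv.Perm (Fin m) → (Fin m → ℕ) := fun σ => fun j => ((σ j : Fin m) : ℕ) with hι
  have hP : S.filter isperm = Finset.image ι univ := by
    ext r
    simp only [Finset.mem_image, Finset.mem_filter, Finset.mem_univ, true_and, hisperm]
    constructor
    · rintro ⟨hrS, σ, hσ⟩
      exact ⟨σ, (funext fun j => (hσ j).symm)⟩
    · rintro ⟨σ, rfl⟩
      refine ⟨?_, σ, fun j => rfl⟩
      rw [hS, Fintype.mem_piFinset]
      intro j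
      rw [Finset.mem_range]
      simp only [hι]
      have := (σ j).2
      omega
  have hι_inj : Function.Injective ι := by
    intro σ σ' hσσ
    ext j
    exact congrFun hσσ j
  have hsum_perm : ∀ σ : Equiv.Perm (Fin m), ∑ j, ι σ j = N := by
    intro σ
    rw [hN, hι]
    exact Equiv.sum_comp σ (fun t : Fin m => (t : ℕ))
  set cZ : ℤ := ∑ σ : Equiv.Perm (Fin m),
    (Matrix.of fun j i : Fin m => (((a i * b j).choose ((σ j : Fin m) : ℕ) : ℕ) : ℤ)).det with hcZ
  have hpart1 : (∑ r ∈ S.filter isperm, lam ^ (∑ j, r j) * Dc r) = lam ^ N * ((cZ : ℤ) : ℂ) := by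
    rw [hP, Finset.sum_image (fun σ _ σ' _ h => hι_inj h)]
    rw [hcZ]
    push_cast
    rw [Finset.mul_sum]
    refine Finset.sum_congr rfl fun σ _ => ?_
    rw [hsum_perm σ]
    congr 1
  -- non-permutation part
  set E : ℂ := ∑ r ∈ S.filter (fun r => ¬ isperm r),
    (if N + 1 ≤ ∑ j, r j then lam ^ (∑ j, r j - (N + 1)) * Dc r else 0) with hE
  have hpart2 : ∑ r ∈ S.filter (fun r => ¬ isperm r), lam ^ (∑ j, r j) * Dc r
      = lam ^ (N + 1) * E := by
    rw [hE, Finset.mul_sum]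
    refine Finset.sum_congr rfl fun r hr => ?_
    rw [Finset.mem_filter] at hr
    obtain ⟨hrS, hnp⟩ := hr
    have hrbd : ∀ j, r j ≤ T := by
      intro j
      rw [hS, Fintype.mem_piFinset] at hrS
      have := Finset.mem_range.1 (hrS j)
      omega
    by_cases hcase : ∀ s : ℕ, (univ.filter (fun j => r j ≤ s)).card ≤ s + 1
    · have hge : N + 1 ≤ ∑ j, r j := comb_lemma m T r hrbd hcase (by rw [hisperm] at hnp; exact hnp)
      rw [if_pos hge, ← mul_assoc, ← pow_add]
      congr 2
      omega
    · push_neg at hcase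
      obtain ⟨s, hs⟩ := hcase
      have hD0 : Dc r = 0 := det_vanish m a b r s (by omega)
      rw [hD0, mul_zero]
      split_ifs <;> simp
  -- integrality of E
  have hEint : E ∈ integralClosure ℤ ℂ := by
    rw [hE]
    refine Subalgebra.sum_mem _ fun r _ => ?_
    split_ifs
    · refine Subalgebra.mul_mem _ (Subalgebra.pow_mem _ ?_ _) ?_
      · exact Subalgebra.sub_mem _ hζint (Subalgebra.one_mem _)
      · rw [← hDZc r]
        exact Subalgebra.intCast_mem _ _
    · exact Subalgebra.zero_mem _
  -- conclude
  rw [hsplit, hpart1, hpart2] at hMtdet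
  have hfactor : lam ^ N * (((cZ : ℤ) : ℂ) + lam * E) = 0 := by
    rw [← hMtdet]; ring
  have hzero : ((cZ : ℤ) : ℂ) + lam * E = 0 := by
    rcases mul_eq_zero.1 hfactor with h | h
    · exact absurd h (pow_ne_zero _ hlamne)
    · exact h
  have hkey : ((cZ : ℤ) : ℂ) = (ζ - 1) * (-E) := by
    rw [← hlam]; linear_combination hzero
  have hdvd : (p : ℤ) ∣ cZ := key_dvd hp hζ (Subalgebra.neg_mem _ hEint) hkey
  exact c_not_dvd p hp m hm a b ha hb halt hblt hdvd

end ChebotarevAux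

/-- **Chebotarëv's theorem.** For a prime `p`, every square submatrix of the Fourier matrix
`F_p = ((1/√p) e^{2πi kl/p})_{0 ≤ k,l ≤ p-1}` is nonsingular: for every `m ≥ 1` and every
pair of injective enumerations `k, l : Fin m → ZMod p` (i.e. subsets `K, L ⊆ {0,…,p-1}`
with `|K| = |L| = m ≥ 1`), the submatrix `((1/√p) e^{2πi k_i l_j/p})_{i,j}` has nonzero
determinant. -/
theorem chebotarev (p : ℕ) (hp : p.Prime) [NeZero p] (m : ℕ) (hm : 1 ≤ m)
    (k l : Fin m → ZMod p) (hk : Function.Injective k) (hl : Function.Injective l) :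
    Matrix.det (Matrix.of fun i j : Fin m =>
      (1 / (Real.sqrt p : ℂ)) *
        Complex.exp (2 * (Real.pi : ℂ) * Complex.I * ((k i).val : ℂ) * ((l j).val : ℂ)
          / (p : ℂ))) ≠ 0 := by
  have hp0 : p ≠ 0 := hp.ne_zero
  set ζ : ℂ := Complex.exp (2 * (Real.pi : ℂ) * Complex.I / p) with hζdef
  have hζ : IsPrimitiveRoot ζ p := Complex.isPrimitiveRoot_exp p hp0
  set a : Fin m → ℕ := fun i => (k i).val with ha'
  set b : Fin m → ℕ := fun j => (l j).val with hb'
  have ha : Function.Injective a := fun i j h => hk (ZMod.val_injective p h)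
  have hb : Function.Injective b := fun i j h => hl (ZMod.val_injective p h)
  have halt : ∀ i, a i < p := fun i => ZMod.val_lt (k i)
  have hblt : ∀ j, b j < p := fun j => ZMod.val_lt (l j)
  have hmat : (Matrix.of fun i j : Fin m =>
      (1 / (Real.sqrt p : ℂ)) *
        Complex.exp (2 * (Real.pi : ℂ) * Complex.I * ((k i).val : ℂ) * ((l j).val : ℂ)
          / (p : ℂ)))
      = (1 / (Real.sqrt p : ℂ)) • (Matrix.of fun i j : Fin m => ζ ^ (a i * b j)) := by
    ext i j
    simp only [Matrix.of_apply, Matrix.smul_apply, smul_eq_mul]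
    congr 1
    rw [hζdef, ← Complex.exp_nat_mul]
    congr 1
    push_cast
    ring
  rw [hmat, Matrix.det_smul]
  refine mul_ne_zero (pow_ne_zero _ ?_) (det_zeta_ne_zero p hp hζ m a b ha hb halt hblt)
  rw [one_div]
  refine inv_ne_zero ?_
  rw [Ne, Complex.ofReal_eq_zero]
  exact Real.sqrt_ne_zero'.2 (by exact_mod_cast hp.pos)
end

section
/- Let p be a prime number, set x_0 = 1, and define h : (ℂ*)^p → (ℂ*)^p by h(x_1, …, x_{p−1}, α) = (α x_1/x_0, α x_2/x_1, …, α x_0/x_{p−1}). Then h is a proper map (the preimage of every compact subset of (ℂ*)^p is compact), and for every (z_0, …, z_{p−1}) ∈ (ℂ*)^p the equation h(x_1, …, x_{p−1}, α) = (z_0, …, z_{p−1}) has exactly p distinct solutions (x_1, …, x_{p−1}, α) in (ℂ*)^p. -/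
open scoped BigOperators

/-- Extension of `(x_1, …, x_{p-1}) ∈ ℂ^{p-1}` to `x = (1, x_1, …, x_{p-1}) ∈ ℂ^p`
(so `x_0 = 1 = x_p`). -/
noncomputable def ext (p : ℕ) [NeZero p] (x' : {i : ZMod p // i ≠ 0} → ℂ) : ZMod p → ℂ :=
  fun i => if h : i = 0 then 1 else x' ⟨i, h⟩

/-- The map `h : (ℂ*)^p → (ℂ*)^p`,
`h(x_1, …, x_{p-1}, α) = (α x_1/x_0, α x_2/x_1, …, α x_0/x_{p-1})` with `x_0 = 1`. -/
noncomputable def hMap (p : ℕ) [NeZero p] :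
    (({i : ZMod p // i ≠ 0} → ℂ) × ℂ) → (ZMod p → ℂ) :=
  fun w j => w.2 * ext p w.1 (j + 1) / ext p w.1 j

noncomputable def gMap (p : ℕ) [NeZero p] (z : ZMod p → ℂ) (α : ℂ) :
    ({i : ZMod p // i ≠ 0} → ℂ) × ℂ :=
  (fun i => (∏ k ∈ Finset.range (i.1.val), z (k : ZMod p)) / α ^ (i.1.val), α)

lemma ext_gMap (p : ℕ) [NeZero p] (z : ZMod p → ℂ) (α : ℂ) (i : ZMod p) :
    ext p (gMap p z α).1 i = (∏ k ∈ Finset.range i.val, z (k : ZMod p)) / α ^ i.val := by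
  unfold ext gMap
  split
  · next h => subst h; simp
  · rfl

lemma prod_univ_eq_range (p : ℕ) [NeZero p] (z : ZMod p → ℂ) :
    ∏ j : ZMod p, z j = ∏ k ∈ Finset.range p, z (k : ZMod p) := by
  refine Finset.prod_nbij' (fun j => ZMod.val j) (fun k => (k : ZMod p)) ?_ ?_ ?_ ?_ ?_
  · intro a _; simp [ZMod.val_lt]
  · intro a _; simp
  · intro a _; simp [ZMod.natCast_val, ZMod.cast_id]
  · intro a ha; simp only [Finset.mem_range] at ha; simp [ZMod.val_cast_of_lt ha]
  · intro a _; simp [ZMod.natCast_val, ZMod.cast_id]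

lemma val_add_one (p : ℕ) [NeZero p] (j : ZMod p) (h : j + 1 ≠ 0) :
    (j + 1).val = j.val + 1 := by
  have hj : j.val < p := ZMod.val_lt j
  rcases lt_or_eq_of_le (Nat.succ_le_of_lt hj) with h1 | h1
  · have : ((j.val + 1 : ℕ) : ZMod p) = j + 1 := by push_cast [ZMod.natCast_val, ZMod.cast_id]; ring
    rw [← this, ZMod.val_cast_of_lt h1]
  · exfalso; apply h
    have : ((j.val + 1 : ℕ) : ZMod p) = j + 1 := by push_cast [ZMod.natCast_val, ZMod.cast_id]; ring
    rw [← this, show j.val + 1 = p from h1, ZMod.natCast_self]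

lemma prod_range_ne_zero (p : ℕ) [NeZero p] (z : ZMod p → ℂ) (hz : ∀ i, z i ≠ 0) (n : ℕ) :
    ∏ k ∈ Finset.range n, z (k : ZMod p) ≠ 0 :=
  Finset.prod_ne_zero_iff.2 fun k _ => hz _

lemma hMap_gMap (p : ℕ) [NeZero p] (z : ZMod p → ℂ) (hz : ∀ i, z i ≠ 0) (α : ℂ)
    (hα : α ≠ 0) (hroot : α ^ p = ∏ j : ZMod p, z j) :
    hMap p (gMap p z α) = z := by
  funext j
  have hP : ∀ n : ℕ, ∏ k ∈ Finset.range n, z (k : ZMod p) ≠ 0 := prod_range_ne_zero p z hz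
  have hgα : (gMap p z α).2 = α := rfl
  unfold hMap
  rw [hgα, ext_gMap, ext_gMap]
  by_cases h1 : j + 1 = 0
  · -- j = -1, j.val = p - 1
    have hp1 : 1 ≤ p := Nat.one_le_iff_ne_zero.2 (NeZero.ne p)
    have hjval : j.val = p - 1 := by
      have : j = ((p - 1 : ℕ) : ZMod p) := by
        have : j = -1 := by linear_combination (norm := ring_nf) h1 -- j + 1 = 0 → j = -1
        rw [this]
        push_cast [Nat.cast_sub hp1]
        simp
      rw [this, ZMod.val_cast_of_lt (by omega)]
    rw [h1, ZMod.val_zero]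
    have hjcast : ((p - 1 : ℕ) : ZMod p) = j := by
      have : j = -1 := by linear_combination (norm := ring_nf) h1
      rw [this]; push_cast [Nat.cast_sub hp1]; simp
    have hs := Finset.prod_range_succ (fun k : ℕ => z (k : ZMod p)) (p - 1)
    rw [show p - 1 + 1 = p from by omega] at hs
    have hsplit : α ^ p = (∏ k ∈ Finset.range (p - 1), z (k : ZMod p)) * z j := by
      rw [hroot, prod_univ_eq_range, hs, hjcast]
    rw [hjval]
    simp only [Finset.range_zero, Finset.prod_empty, pow_zero, div_one, mul_one]
    rw [div_div_eq_mul_div, ← pow_succ', show (p-1)+1 = p from by omega, hsplit,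
      mul_comm, mul_div_assoc, div_self (hP (p-1)), mul_one]
  · have hv : (j + 1).val = j.val + 1 := val_add_one p j h1
    have hjc : ((j.val : ℕ) : ZMod p) = j := ZMod.natCast_rightInverse j
    rw [hv, Finset.prod_range_succ, hjc]
    have := hP j.val
    field_simp
    ring

lemma ext_ne_zero (p : ℕ) [NeZero p] (x' : {i : ZMod p // i ≠ 0} → ℂ) (hx : ∀ i, x' i ≠ 0)
    (i : ZMod p) : ext p x' i ≠ 0 := by
  unfold ext; split
  · exact one_ne_zero
  · exact hx _

lemma key_rec (p : ℕ) [NeZero p] (w : ({i : ZMod p // i ≠ 0} → ℂ) × ℂ)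
    (hw1 : ∀ i, w.1 i ≠ 0) (z : ZMod p → ℂ) (hz : hMap p w = z) :
    ∀ n : ℕ, ext p w.1 (n : ZMod p) * w.2 ^ n = ∏ k ∈ Finset.range n, z (k : ZMod p) := by
  intro n
  induction n with
  | zero => simp [ext]
  | succ n ih =>
    have hcoord : w.2 * ext p w.1 ((n : ZMod p) + 1) / ext p w.1 (n : ZMod p) = z (n : ZMod p) :=
      congrFun hz (n : ZMod p)
    have hne := ext_ne_zero p w.1 hw1 (n : ZMod p)
    have hmul : w.2 * ext p w.1 ((n : ZMod p) + 1) = z (n : ZMod p) * ext p w.1 (n : ZMod p) := by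
      field_simp at hcoord
      linear_combination hcoord
    rw [Finset.prod_range_succ, ← ih]
    push_cast
    calc ext p w.1 ((n : ZMod p) + 1) * w.2 ^ (n + 1)
        = (w.2 * ext p w.1 ((n : ZMod p) + 1)) * w.2 ^ n := by ring
      _ = z (n : ZMod p) * ext p w.1 (n : ZMod p) * w.2 ^ n := by rw [hmul]
      _ = ext p w.1 (n : ZMod p) * w.2 ^ n * z (n : ZMod p) := by ring

lemma eq_gMap (p : ℕ) [NeZero p] (w : ({i : ZMod p // i ≠ 0} → ℂ) × ℂ)
    (hw1 : ∀ i, w.1 i ≠ 0) (hw2 : w.2 ≠ 0) (z : ZMod p → ℂ) (hz : hMap p w = z) :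
    w.2 ^ p = ∏ j : ZMod p, z j ∧ w = gMap p z w.2 := by
  have key := key_rec p w hw1 z hz
  have hpow : w.2 ^ p = ∏ j : ZMod p, z j := by
    have := key p
    rw [ZMod.natCast_self] at this
    rw [show ext p w.1 (0 : ZMod p) = 1 from dif_pos rfl, one_mul] at this
    rw [this, prod_univ_eq_range]
  refine ⟨hpow, ?_⟩
  unfold gMap
  ext i
  · have := key i.1.val
    rw [ZMod.natCast_rightInverse i.1] at this
    have hx : ext p w.1 i.1 = w.1 i := by
      unfold ext; rw [dif_neg i.2]
    rw [hx] at this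
    simp only
    rw [← this]
    field_simp
  · rfl

lemma ncard_pow_eq (p : ℕ) (hp : 0 < p) (c : ℂ) (hc : c ≠ 0) :
    {α : ℂ | α ^ p = c}.ncard = p := by
  have hζ := Complex.isPrimitiveRoot_exp p hp.ne'
  have hset : {α : ℂ | α ^ p = c} = ↑(Polynomial.nthRoots p c).toFinset := by
    ext α
    simp [Polynomial.mem_nthRoots hp]
  rw [hset, Set.ncard_coe_finset, Multiset.toFinset_card_of_nodup (hζ.nthRoots_nodup hc),
    hζ.card_nthRoots]
  have : ∃ α : ℂ, α ^ p = c := by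
    obtain ⟨α, hα⟩ := IsAlgClosed.exists_pow_nat_eq c hp
    exact ⟨α, hα⟩
  rw [if_pos this]

lemma gMap_mem_domain (p : ℕ) [NeZero p] (z : ZMod p → ℂ) (hz : ∀ i, z i ≠ 0) (α : ℂ)
    (hα : α ≠ 0) : (∀ i, (gMap p z α).1 i ≠ 0) ∧ (gMap p z α).2 ≠ 0 := by
  refine ⟨fun i => ?_, hα⟩
  exact div_ne_zero (prod_range_ne_zero p z hz _) (pow_ne_zero _ hα)

lemma alpha_ne_zero (p : ℕ) [NeZero p] (z : ZMod p → ℂ) (hz : ∀ i, z i ≠ 0) (α : ℂ)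
    (hpow : α ^ p = ∏ j : ZMod p, z j) : α ≠ 0 := by
  intro h0
  have : (∏ j : ZMod p, z j) ≠ 0 := Finset.prod_ne_zero_iff.2 fun j _ => hz j
  rw [← hpow, h0, zero_pow (NeZero.ne p)] at this
  exact this rfl

/-- For `p` prime, `h` is a proper map from `(ℂ*)^p` to `(ℂ*)^p` (the preimage of every
compact subset of `(ℂ*)^p` is compact), and for every `z ∈ (ℂ*)^p` the equation
`h(x_1, …, x_{p-1}, α) = z` has exactly `p` distinct solutions in `(ℂ*)^p`. -/
theorem hMap_proper_and_fibers (p : ℕ) (hp : p.Prime) [NeZero p] :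
    (∀ K : Set (ZMod p → ℂ), IsCompact K → (∀ z ∈ K, ∀ i, z i ≠ 0) →
      IsCompact ({w : ({i : ZMod p // i ≠ 0} → ℂ) × ℂ | (∀ i, w.1 i ≠ 0) ∧ w.2 ≠ 0} ∩
        hMap p ⁻¹' K)) ∧
    (∀ z : ZMod p → ℂ, (∀ i, z i ≠ 0) →
      {w : ({i : ZMod p // i ≠ 0} → ℂ) × ℂ |
        ((∀ i, w.1 i ≠ 0) ∧ w.2 ≠ 0) ∧ hMap p w = z}.ncard = p) := by
  constructor
  · intro K hK hKne
    set T : Set ((ZMod p → ℂ) × ℂ) :=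
      (K ×ˢ (Set.univ : Set ℂ)) ∩ {q | q.2 ^ p = ∏ j : ZMod p, q.1 j} with hTdef
    -- T is compact
    have hcprod : Continuous fun q : (ZMod p → ℂ) × ℂ => ∏ j : ZMod p, q.1 j :=
      continuous_finset_prod _ fun j _ => (continuous_apply j).comp continuous_fst
    obtain ⟨M, hM⟩ : ∃ M, ∀ z ∈ K, ‖∏ j : ZMod p, z j‖ ≤ M := by
      rcases K.eq_empty_or_nonempty with h | h
      · exact ⟨0, by simp [h]⟩
      · obtain ⟨z₀, hz₀, hmax⟩ := hK.exists_isMaxOn h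
          (Continuous.norm (continuous_finset_prod (Finset.univ : Finset (ZMod p))
            (fun j _ => (continuous_apply j : Continuous fun z : ZMod p → ℂ => z j)))).continuousOn
        exact ⟨_, fun z hzK => hmax hzK⟩
    have hTclosed : IsClosed T :=
      (hK.isClosed.prod isClosed_univ).inter (isClosed_eq (continuous_snd.pow p) hcprod)
    have hTsub : T ⊆ K ×ˢ Metric.closedBall (0 : ℂ) (max 1 M) := by
      rintro ⟨z, α⟩ ⟨⟨hzK, -⟩, hpow⟩
      refine ⟨hzK, ?_⟩
      simp only [Metric.mem_closedBall, dist_zero_right]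
      have hb : ‖α‖ ^ p = ‖∏ j : ZMod p, z j‖ := by rw [← norm_pow, hpow]
      rcases le_or_gt ‖α‖ 1 with h | h
      · exact le_trans h (le_max_left _ _)
      · refine le_trans ?_ (le_max_right _ _)
        calc ‖α‖ ≤ ‖α‖ ^ p := le_self_pow₀ h.le (NeZero.ne p)
          _ = ‖∏ j : ZMod p, z j‖ := hb
          _ ≤ M := hM z hzK
    have hTcomp : IsCompact T :=
      (hK.prod (isCompact_closedBall 0 _)).of_isClosed_subset hTclosed hTsub
    -- continuity of gMap on T
    have hαT : ∀ q ∈ T, q.2 ≠ 0 := by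
      rintro ⟨z, α⟩ ⟨⟨hzK, -⟩, hpow⟩
      exact alpha_ne_zero p z (hKne z hzK) α hpow
    have hcont : ContinuousOn (fun q : (ZMod p → ℂ) × ℂ => gMap p q.1 q.2) T := by
      apply ContinuousOn.prodMk
      · apply continuousOn_pi.2
        intro i
        apply ContinuousOn.div
        · exact Continuous.continuousOn (f := fun q : (ZMod p → ℂ) × ℂ =>
            ∏ k ∈ Finset.range (i.1.val), q.1 (k : ZMod p))
            (continuous_finset_prod _ fun k _ =>
              (continuous_apply ((k : ℕ) : ZMod p)).comp continuous_fst)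
        · exact (continuous_snd.pow _).continuousOn
        · intro q hq
          exact pow_ne_zero _ (hαT q hq)
      · exact continuous_snd.continuousOn
    -- the set equals the image of T
    have himage : {w : ({i : ZMod p // i ≠ 0} → ℂ) × ℂ | (∀ i, w.1 i ≠ 0) ∧ w.2 ≠ 0} ∩
        hMap p ⁻¹' K = (fun q : (ZMod p → ℂ) × ℂ => gMap p q.1 q.2) '' T := by
      ext w
      constructor
      · rintro ⟨⟨hw1, hw2⟩, hwK⟩
        obtain ⟨hpow, heq⟩ := eq_gMap p w hw1 hw2 (hMap p w) rfl
        exact ⟨(hMap p w, w.2), ⟨⟨hwK, trivial⟩, hpow⟩, heq.symm⟩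
      · rintro ⟨⟨z, α⟩, ⟨⟨hzK, -⟩, hpow⟩, rfl⟩
        have hzne := hKne z hzK
        have hα : α ≠ 0 := alpha_ne_zero p z hzne α hpow
        have hh := hMap_gMap p z hzne α hα hpow
        exact ⟨gMap_mem_domain p z hzne α hα, by simpa [hh] using hzK⟩
    rw [himage]
    exact hTcomp.image_of_continuousOn hcont
  · intro z hz
    have hC : (∏ j : ZMod p, z j) ≠ 0 := Finset.prod_ne_zero_iff.2 fun j _ => hz j
    have hfib : {w : ({i : ZMod p // i ≠ 0} → ℂ) × ℂ |
        ((∀ i, w.1 i ≠ 0) ∧ w.2 ≠ 0) ∧ hMap p w = z} =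
        gMap p z '' {α : ℂ | α ^ p = ∏ j : ZMod p, z j} := by
      ext w
      constructor
      · rintro ⟨⟨hw1, hw2⟩, hwz⟩
        obtain ⟨hpow, heq⟩ := eq_gMap p w hw1 hw2 z hwz
        exact ⟨w.2, hpow, heq.symm⟩
      · rintro ⟨α, hpow, rfl⟩
        have hα : α ≠ 0 := alpha_ne_zero p z hz α hpow
        exact ⟨gMap_mem_domain p z hz α hα, hMap_gMap p z hz α hα hpow⟩
    rw [hfib, Set.ncard_image_of_injective _ (fun a b hab => congrArg Prod.snd hab),
      ncard_pow_eq p hp.pos _ hC]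
end
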